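/- Let 0 < γ < 1/2, let η ∈ ℝ with η ≠ 0, let t < T be real numbers, and let ξ : [t, T] → ℝ be continuous and nonnegative. Then ∫_t^T ∫_s^T ∫_r^T 2η² ξ(r) ξ(u) (r − s)^(−γ) (u − s)^(−γ) exp( η² ∫_t^s (r − v)^(−γ)(u − v)^(−γ) dv ) du dr ds = 2 ∫_t^T ξ(u) ∫_t^u ξ(r) [ exp( η² ∫_t^r (r − v)^(−γ)(u − v)^(−γ) dv ) − 1 ] dr du. -/
import Mathlib


open MeasureTheory intervalIntegral

open Set

noncomputable section RB

lemma measurable_rpow_const (c : ℝ) : Measurable (fun x : ℝ => x ^ c) := by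
  measurability

/-- The singular kernel. -/
def Kf (γ r u v : ℝ) : ℝ := (r - v) ^ (-γ) * (u - v) ^ (-γ)

lemma Kf_meas (γ r u : ℝ) : Measurable (Kf γ r u) :=
  ((measurable_rpow_const (-γ)).comp (measurable_const.sub measurable_id)).mul
    ((measurable_rpow_const (-γ)).comp (measurable_const.sub measurable_id))

lemma Kf_nonneg {γ r u v : ℝ} (hvr : v ≤ r) (hvu : v ≤ u) : 0 ≤ Kf γ r u v :=
  mul_nonneg (Real.rpow_nonneg (by linarith) _) (Real.rpow_nonneg (by linarith) _)

lemma Kf_le {γ r u v : ℝ} (hγ0 : 0 < γ) (hvr : v ≤ r) (hru : r ≤ u) :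
    Kf γ r u v ≤ (r - v) ^ (-(2 * γ)) := by
  rcases eq_or_lt_of_le hvr with h | h
  · have h0 : r - v = 0 := by rw [h]; ring
    simp [Kf, h0, Real.zero_rpow (show -γ ≠ 0 from neg_ne_zero.2 hγ0.ne'),
      Real.zero_rpow (show -(2*γ) ≠ 0 from neg_ne_zero.2 (by positivity))]
  · have h1 : (0:ℝ) < r - v := by linarith
    have h2 : (u - v) ^ (-γ) ≤ (r - v) ^ (-γ) :=
      Real.rpow_le_rpow_of_nonpos h1 (by linarith) (by linarith)
    calc Kf γ r u v ≤ (r - v) ^ (-γ) * (r - v) ^ (-γ) :=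
          mul_le_mul_of_nonneg_left h2 (Real.rpow_nonneg h1.le _)
      _ = (r - v) ^ (-(2 * γ)) := by
          rw [← Real.rpow_add h1]; ring_nf

/-- `(c - ·)^e` is interval integrable for `e > -1`. -/
lemma rpow_comp_intable {e : ℝ} (he : -1 < e) (c a b : ℝ) :
    IntervalIntegrable (fun v => (c - v) ^ e) volume a b := by
  simpa using (intervalIntegrable_rpow' he (a := c - a) (b := c - b)).comp_sub_left c

lemma Kf_intable {γ r u : ℝ} (hγ0 : 0 < γ) (hγ : γ < 1 / 2) (hru : r ≤ u)
    {a b : ℝ} (ha : a ≤ r) (hb : b ≤ r) :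
    IntervalIntegrable (Kf γ r u) volume a b := by
  apply (rpow_comp_intable (e := -(2*γ)) (by linarith) r a b).mono_fun
    ((Kf_meas γ r u).aestronglyMeasurable)
  filter_upwards [ae_restrict_mem measurableSet_uIoc] with v hv
  have hvr : v ≤ r := hv.2.trans (max_le ha hb)
  rw [Real.norm_eq_abs, Real.norm_eq_abs, abs_of_nonneg (Kf_nonneg hvr (hvr.trans hru)),
    abs_of_nonneg (Real.rpow_nonneg (show (0:ℝ) ≤ r - v by linarith) _)]
  exact Kf_le hγ0 hvr hru

/-- Explicit value of `∫_t^r (r-v)^(-2γ) dv`. -/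
lemma int_rpow_val {γ : ℝ} (hγ0 : 0 < γ) (hγ : γ < 1 / 2) {t r : ℝ} (htr : t ≤ r) :
    ∫ v in t..r, (r - v) ^ (-(2*γ)) = (r - t) ^ (1 - 2*γ) / (1 - 2*γ) := by
  rw [intervalIntegral.integral_comp_sub_left (fun x => x ^ (-(2*γ))) r, sub_self,
    integral_rpow (Or.inl (by linarith))]
  rw [Real.zero_rpow (by intro h; nlinarith [h] : -(2*γ) + 1 ≠ 0)]
  ring_nf

section FTC
variable {γ t r u η : ℝ}

lemma G_mono (hγ0 : 0 < γ) (hγ : γ < 1 / 2) {s : ℝ} (ht : t ≤ s) (hsr : s ≤ r) (hru : r ≤ u) :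
    ∫ v in t..s, Kf γ r u v ≤ ∫ v in t..r, Kf γ r u v := by
  have h1 := Kf_intable (r := r) (u := u) hγ0 hγ hru (ht.trans hsr) hsr
  have h2 := Kf_intable (r := r) (u := u) hγ0 hγ hru hsr le_rfl
  have hadd := intervalIntegral.integral_add_adjacent_intervals h1 h2
  have hnn : 0 ≤ ∫ v in s..r, Kf γ r u v :=
    intervalIntegral.integral_nonneg hsr (fun v hv => Kf_nonneg hv.2 (hv.2.trans hru))
  linarith

lemma G_nonneg {s : ℝ} (ht : t ≤ s) (hsr : s ≤ r) (hru : r ≤ u) :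
    0 ≤ ∫ v in t..s, Kf γ r u v :=
  intervalIntegral.integral_nonneg ht
    (fun v hv => Kf_nonneg (hv.2.trans hsr) (hv.2.trans (hsr.trans hru)))

lemma G_le (hγ0 : 0 < γ) (hγ : γ < 1 / 2) {s : ℝ} (ht : t ≤ s) (hsr : s ≤ r) (hru : r ≤ u) :
    ∫ v in t..s, Kf γ r u v ≤ (r - t) ^ (1 - 2*γ) / (1 - 2*γ) := by
  have htr : t ≤ r := ht.trans hsr
  have b1 : (∫ v in t..s, Kf γ r u v) ≤ ∫ v in t..s, (r - v) ^ (-(2*γ)) :=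
    intervalIntegral.integral_mono_on ht (Kf_intable hγ0 hγ hru htr hsr)
      (rpow_comp_intable (by linarith) r t s)
      (fun v hv => Kf_le hγ0 (hv.2.trans hsr) hru)
  have b2 : (∫ v in t..s, (r - v) ^ (-(2*γ))) ≤ ∫ v in t..r, (r - v) ^ (-(2*γ)) := by
    have hadd := intervalIntegral.integral_add_adjacent_intervals
      (rpow_comp_intable (by linarith : (-1:ℝ) < -(2*γ)) r t s)
      (rpow_comp_intable (by linarith : (-1:ℝ) < -(2*γ)) r s r)
    have hnn : 0 ≤ ∫ v in s..r, (r - v) ^ (-(2*γ)) :=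
      intervalIntegral.integral_nonneg hsr
        (fun v hv => Real.rpow_nonneg (by linarith [hv.2] : (0:ℝ) ≤ r - v) _)
    linarith
  calc (∫ v in t..s, Kf γ r u v) ≤ ∫ v in t..r, (r - v) ^ (-(2*γ)) := le_trans b1 b2
    _ = (r - t) ^ (1 - 2*γ) / (1 - 2*γ) := int_rpow_val hγ0 hγ htr

lemma FTC_core (hγ0 : 0 < γ) (hγ : γ < 1 / 2) (htr : t ≤ r) (hru : r ≤ u) :
    ∫ s in t..r, η^2 * Kf γ r u s * Real.exp (η^2 * ∫ v in t..s, Kf γ r u v)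
      = Real.exp (η^2 * ∫ v in t..r, Kf γ r u v) - 1 := by
  set G : ℝ → ℝ := fun s => ∫ v in t..s, Kf γ r u v with hG
  set f : ℝ → ℝ := fun s => Real.exp (η^2 * G s) with hf
  have hGcont : ContinuousOn G (Icc t r) := by
    have := continuousOn_primitive_interval'
      (Kf_intable (u := u) hγ0 hγ hru htr le_rfl) (left_mem_uIcc (a := t) (b := r))
    rwa [uIcc_of_le htr] at this
  have hcont : ContinuousOn f (Icc t r) :=
    Real.continuous_exp.comp_continuousOn (continuousOn_const.mul hGcont)
  have hderiv : ∀ s ∈ Ioo t r, HasDerivAt f (η^2 * Kf γ r u s * f s) s := by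
    intro s hs
    have hKc : ContinuousAt (Kf γ r u) s := by
      have h1 : ContinuousAt (fun v : ℝ => (r - v) ^ (-γ)) s :=
        (Real.continuousAt_rpow_const (r - s) (-γ)
            (Or.inl (ne_of_gt (by linarith [hs.2] : (0:ℝ) < r - s)))).comp
          ((continuous_const.sub continuous_id).continuousAt)
      have h2 : ContinuousAt (fun v : ℝ => (u - v) ^ (-γ)) s :=
        (Real.continuousAt_rpow_const (u - s) (-γ)
            (Or.inl (ne_of_gt (by have := hs.2; linarith : (0:ℝ) < u - s)))).comp
          ((continuous_const.sub continuous_id).continuousAt)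
      exact h1.mul h2
    have hG' : HasDerivAt G (Kf γ r u s) s :=
      intervalIntegral.integral_hasDerivAt_right
        (Kf_intable hγ0 hγ hru htr hs.2.le)
        ((Kf_meas γ r u).aestronglyMeasurable.stronglyMeasurableAtFilter) hKc
    have := (hG'.const_mul (η^2)).exp
    convert this using 1
    ring
  have hint : IntervalIntegrable (fun s => η^2 * Kf γ r u s * f s) volume t r := by
    set C : ℝ := Real.exp (η^2 * G r) with hC
    apply IntervalIntegrable.mono_fun
      ((rpow_comp_intable (by linarith : (-1:ℝ) < -(2*γ)) r t r).const_mul (η^2 * C))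
    · apply AEStronglyMeasurable.mul
      · exact (measurable_const.mul (Kf_meas γ r u)).aestronglyMeasurable
      · rw [uIoc_of_le htr]
        exact ((hcont.mono Ioc_subset_Icc_self).aestronglyMeasurable measurableSet_Ioc)
    · rw [uIoc_of_le htr]
      filter_upwards [ae_restrict_mem measurableSet_Ioc] with s hs
      have h1 : Kf γ r u s ≤ (r - s) ^ (-(2*γ)) := Kf_le hγ0 hs.2 hru
      have h1' : 0 ≤ Kf γ r u s := Kf_nonneg hs.2 (hs.2.trans hru)
      have h2 : f s ≤ C := by
        apply Real.exp_le_exp.2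
        exact mul_le_mul_of_nonneg_left (G_mono hγ0 hγ hs.1.le hs.2 hru) (sq_nonneg η)
      have h3 : (0:ℝ) < f s := Real.exp_pos _
      have h4 : (0:ℝ) ≤ (r - s) ^ (-(2*γ)) := Real.rpow_nonneg (by linarith [hs.2]) _
      rw [Real.norm_eq_abs, Real.norm_eq_abs, abs_of_nonneg (by positivity),
        abs_of_nonneg (by positivity : (0:ℝ) ≤ η^2 * C * (r - s) ^ (-(2*γ)))]
      calc η^2 * Kf γ r u s * f s ≤ (η^2 * (r - s) ^ (-(2*γ))) * C :=
            mul_le_mul (mul_le_mul_of_nonneg_left h1 (sq_nonneg η)) h2 h3.le (by positivity)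
        _ = η^2 * C * (r - s) ^ (-(2*γ)) := by ring
  have hmain := intervalIntegral.integral_eq_sub_of_hasDerivAt_of_le htr hcont hderiv hint
  rw [hmain, hf, hG]
  simp [intervalIntegral.integral_same]

end FTC
section Meas
variable {γ t T η : ℝ}

/-- Measurable version of the inner primitive `s ↦ ∫_t^s K(r,u,·)`. -/
def Pfun (γ t : ℝ) (p : ℝ × ℝ × ℝ) : ℝ :=
  ∫ v, (Set.Ioc t p.1).indicator (fun v => Kf γ p.2.1 p.2.2 v) v

lemma Pfun_meas (γ t : ℝ) : Measurable (Pfun γ t) := by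
  have hF : StronglyMeasurable (fun q : (ℝ × ℝ × ℝ) × ℝ =>
      (Set.Ioc t q.1.1).indicator (fun v => Kf γ q.1.2.1 q.1.2.2 v) q.2) := by
    apply Measurable.stronglyMeasurable
    have heq : (fun q : (ℝ × ℝ × ℝ) × ℝ =>
        (Set.Ioc t q.1.1).indicator (fun v => Kf γ q.1.2.1 q.1.2.2 v) q.2)
        = fun q : (ℝ × ℝ × ℝ) × ℝ =>
          Set.indicator {q' : (ℝ × ℝ × ℝ) × ℝ | t < q'.2 ∧ q'.2 ≤ q'.1.1}
            (fun q' => Kf γ q'.1.2.1 q'.1.2.2 q'.2) q := by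
      funext q
      by_cases h : q.2 ∈ Set.Ioc t q.1.1
      · rw [Set.indicator_of_mem h, Set.indicator_of_mem (by exact h)]
      · rw [Set.indicator_of_notMem h, Set.indicator_of_notMem (by exact h)]
    rw [heq]
    apply Measurable.indicator
    · unfold Kf
      apply Measurable.mul
      · exact (measurable_rpow_const (-γ)).comp (measurable_fst.snd.fst.sub measurable_snd)
      · exact (measurable_rpow_const (-γ)).comp (measurable_fst.snd.snd.sub measurable_snd)
    · exact MeasurableSet.inter
        (measurableSet_lt measurable_const measurable_snd)
        (measurableSet_le measurable_snd measurable_fst.fst)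
  exact hF.integral_prod_right'.measurable

lemma eqP {s r u : ℝ} (hts : t ≤ s) :
    (∫ v in t..s, Kf γ r u v) = Pfun γ t (s, r, u) := by
  rw [intervalIntegral.integral_of_le hts, Pfun,
    MeasureTheory.integral_indicator measurableSet_Ioc]

/-- The measurable integrand of the triple integral. -/
def ftil (γ t η : ℝ) (ξ : ℝ → ℝ) (s r u : ℝ) : ℝ :=
  2 * η ^ 2 * ξ r * ξ u * (r - s) ^ (-γ) * (u - s) ^ (-γ) *
    Real.exp (η ^ 2 * Pfun γ t (s, r, u))

lemma ftil_meas (γ t η : ℝ) (ξ : ℝ → ℝ) (hξ : Measurable ξ) :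
    Measurable (fun p : ℝ × ℝ × ℝ => ftil γ t η ξ p.1 p.2.1 p.2.2) := by
  unfold ftil
  refine ((((measurable_const.mul (hξ.comp measurable_snd.fst)).mul
    (hξ.comp measurable_snd.snd)).mul ?_).mul ?_).mul ?_
  · exact (measurable_rpow_const (-γ)).comp (measurable_snd.fst.sub measurable_fst)
  · exact (measurable_rpow_const (-γ)).comp (measurable_snd.snd.sub measurable_fst)
  · exact Real.measurable_exp.comp (measurable_const.mul
      ((Pfun_meas γ t).comp (measurable_fst.prodMk (measurable_snd.fst.prodMk measurable_snd.snd))))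

/-- Measurable version of the inner double integral `(s,r) ↦ ∫_r^T f̃`. -/
def Dhat (γ t T η : ℝ) (ξ : ℝ → ℝ) (q : ℝ × ℝ) : ℝ :=
  ∫ u, (Set.Ioc q.2 T).indicator (fun u => ftil γ t η ξ q.1 q.2 u) u

lemma Dhat_meas (γ t T η : ℝ) (ξ : ℝ → ℝ) (hξ : Measurable ξ) :
    Measurable (Dhat γ t T η ξ) := by
  have hF : StronglyMeasurable (fun q : (ℝ × ℝ) × ℝ =>
      (Set.Ioc q.1.2 T).indicator (fun u => ftil γ t η ξ q.1.1 q.1.2 u) q.2) := by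
    apply Measurable.stronglyMeasurable
    have heq : (fun q : (ℝ × ℝ) × ℝ =>
        (Set.Ioc q.1.2 T).indicator (fun u => ftil γ t η ξ q.1.1 q.1.2 u) q.2)
        = fun q : (ℝ × ℝ) × ℝ =>
          Set.indicator {q' : (ℝ × ℝ) × ℝ | q'.1.2 < q'.2 ∧ q'.2 ≤ T}
            (fun q' => ftil γ t η ξ q'.1.1 q'.1.2 q'.2) q := by
      funext q
      by_cases h : q.2 ∈ Set.Ioc q.1.2 T
      · rw [Set.indicator_of_mem h, Set.indicator_of_mem (by exact h)]
      · rw [Set.indicator_of_notMem h, Set.indicator_of_notMem (by exact h)]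
    rw [heq]
    apply Measurable.indicator
    · exact (ftil_meas γ t η ξ hξ).comp
        ((measurable_fst.fst).prodMk ((measurable_fst.snd).prodMk measurable_snd))
    · exact MeasurableSet.inter
        (measurableSet_lt measurable_fst.snd measurable_snd)
        (measurableSet_le measurable_snd measurable_const)
  exact hF.integral_prod_right'.measurable

lemma eqDhat {s r : ℝ} (hrT : r ≤ T) (η : ℝ) (ξ : ℝ → ℝ) :
    (∫ u in r..T, ftil γ t η ξ s r u) = Dhat γ t T η ξ (s, r) := by
  rw [intervalIntegral.integral_of_le hrT, Dhat,
    MeasureTheory.integral_indicator measurableSet_Ioc]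

end Meas
section Swap

lemma ae_prod_mem {A B : Set ℝ} (hA : MeasurableSet A) (hB : MeasurableSet B) :
    ∀ᵐ p : ℝ × ℝ ∂((volume.restrict A).prod (volume.restrict B)), p.1 ∈ A ∧ p.2 ∈ B := by
  rw [MeasureTheory.ae_iff]
  have hsub : {p : ℝ × ℝ | ¬(p.1 ∈ A ∧ p.2 ∈ B)}
      ⊆ (Aᶜ ×ˢ (Set.univ : Set ℝ)) ∪ ((Set.univ : Set ℝ) ×ˢ Bᶜ) := by
    intro p hp
    simp only [Set.mem_setOf_eq, not_and_or] at hp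
    rcases hp with h | h
    · exact Or.inl ⟨h, Set.mem_univ _⟩
    · exact Or.inr ⟨Set.mem_univ _, h⟩
  refine measure_mono_null hsub (measure_union_null ?_ ?_)
  · rw [MeasureTheory.Measure.prod_prod, MeasureTheory.Measure.restrict_apply hA.compl]
    simp
  · rw [MeasureTheory.Measure.prod_prod, MeasureTheory.Measure.restrict_apply hB.compl]
    simp

lemma rect_swap {a b c d : ℝ} (hab : a ≤ b) (hcd : c ≤ d) (F : ℝ → ℝ → ℝ)
    (hF : Integrable (fun p : ℝ × ℝ => F p.1 p.2)
      ((volume.restrict (Set.Ioc a b)).prod (volume.restrict (Set.Ioc c d)))) :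
    ∫ s in a..b, ∫ u in c..d, F s u = ∫ u in c..d, ∫ s in a..b, F s u := by
  simp only [intervalIntegral.integral_of_le hab, intervalIntegral.integral_of_le hcd]
  exact MeasureTheory.integral_integral_swap hF

lemma triangle_swap {t T : ℝ} (htT : t ≤ T) (F : ℝ → ℝ → ℝ)
    (hF : Integrable (fun p : ℝ × ℝ => if p.1 < p.2 then F p.1 p.2 else 0)
      ((volume.restrict (Set.Ioc t T)).prod (volume.restrict (Set.Ioc t T)))) :
    ∫ s in t..T, ∫ r in s..T, F s r = ∫ r in t..T, ∫ s in t..r, F s r := by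
  rw [intervalIntegral.integral_of_le htT, intervalIntegral.integral_of_le htT]
  have h1 : ∀ s ∈ Set.Ioc t T,
      (∫ r in s..T, F s r) = ∫ r in Set.Ioc t T, (if s < r then F s r else 0) := by
    intro s hs
    rw [intervalIntegral.integral_of_le hs.2]
    have hind : ∀ r : ℝ, (if s < r then F s r else 0) = (Set.Ioi s).indicator (F s) r := by
      intro r; simp [Set.indicator_apply, Set.mem_Ioi]
    have hset : Set.Ioc t T ∩ Set.Ioi s = Set.Ioc s T := by
      ext r
      simp only [Set.mem_Ioc, Set.mem_inter_iff, Set.mem_Ioi]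
      constructor
      · rintro ⟨⟨_, h2⟩, h3⟩; exact ⟨h3, h2⟩
      · rintro ⟨h1, h2⟩; exact ⟨⟨lt_of_le_of_lt hs.1.le h1, h2⟩, h1⟩
    calc (∫ r in Set.Ioc s T, F s r)
        = ∫ r in Set.Ioc t T ∩ Set.Ioi s, F s r := by rw [hset]
      _ = ∫ r in Set.Ioc t T, (Set.Ioi s).indicator (F s) r := by
          rw [MeasureTheory.setIntegral_indicator measurableSet_Ioi]
      _ = ∫ r in Set.Ioc t T, (if s < r then F s r else 0) := by
          rw [show (fun r => if s < r then F s r else 0) = (Set.Ioi s).indicator (F s) from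
            funext hind]
  rw [MeasureTheory.setIntegral_congr_fun measurableSet_Ioc h1]
  rw [MeasureTheory.integral_integral_swap hF]
  apply MeasureTheory.setIntegral_congr_fun measurableSet_Ioc
  intro r hr
  have hind : ∀ s : ℝ, (if s < r then F s r else 0) = (Set.Iio r).indicator (fun s => F s r) s := by
    intro s; simp [Set.indicator_apply, Set.mem_Iio]
  calc (∫ s in Set.Ioc t T, (if s < r then F s r else 0))
      = ∫ s in Set.Ioc t T, (Set.Iio r).indicator (fun s => F s r) s := by
        rw [show (fun s => if s < r then F s r else 0) = (Set.Iio r).indicator (fun s => F s r)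
          from funext hind]
    _ = ∫ s in Set.Ioc t T ∩ Set.Iio r, F s r := by
        rw [MeasureTheory.setIntegral_indicator measurableSet_Iio]
    _ = ∫ s in Set.Ioo t r, F s r := by
        have hset : Set.Ioc t T ∩ Set.Iio r = Set.Ioo t r := by
          ext s
          simp only [Set.mem_Ioc, Set.mem_inter_iff, Set.mem_Iio, Set.mem_Ioo]
          constructor
          · rintro ⟨⟨h1, _⟩, h3⟩; exact ⟨h1, h3⟩
          · rintro ⟨h1, h3⟩; exact ⟨⟨h1, le_trans h3.le hr.2⟩, h3⟩
        rw [hset]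
    _ = ∫ s in Set.Ioc t r, F s r := (MeasureTheory.integral_Ioc_eq_integral_Ioo).symm
    _ = ∫ s in t..r, F s r := (intervalIntegral.integral_of_le hr.1.le).symm

end Swap
section Bounds
variable {γ t T η B : ℝ} {ξ : ℝ → ℝ}

lemma rpow_comp_intable' {e : ℝ} (he : -1 < e) (c a b : ℝ) :
    IntervalIntegrable (fun v => (v - c) ^ e) volume a b := by
  simpa using (intervalIntegrable_rpow' he (a := a - c) (b := b - c)).comp_sub_right c

lemma G_le_A0 (hγ0 : 0 < γ) (hγ : γ < 1 / 2) {s r u : ℝ} (ht : t ≤ s) (hsr : s ≤ r)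
    (hrT : r ≤ T) (hru : r ≤ u) :
    ∫ v in t..s, Kf γ r u v ≤ (T - t) ^ (1 - 2*γ) / (1 - 2*γ) := by
  refine le_trans (G_le hγ0 hγ ht hsr hru) ?_
  have h1 : (0:ℝ) < 1 - 2*γ := by linarith
  have h2 : (r - t) ^ (1 - 2*γ) ≤ (T - t) ^ (1 - 2*γ) :=
    Real.rpow_le_rpow (by linarith [ht.trans hsr]) (by linarith) h1.le
  exact div_le_div_of_nonneg_right h2 h1.le

lemma ftil_nonneg (h0 : ∀ x, 0 ≤ ξ x) {s r u : ℝ} (hsr : s ≤ r) (hsu : s ≤ u) :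
    0 ≤ ftil γ t η ξ s r u := by
  unfold ftil
  have h1 : (0:ℝ) ≤ (r - s) ^ (-γ) := Real.rpow_nonneg (by linarith) _
  have h2 : (0:ℝ) ≤ (u - s) ^ (-γ) := Real.rpow_nonneg (by linarith) _
  have := h0 r; have := h0 u; have := Real.exp_pos (η^2 * Pfun γ t (s, r, u))
  positivity

lemma ftil_le (hγ0 : 0 < γ) (hγ : γ < 1 / 2) (h0 : ∀ x, 0 ≤ ξ x) (hB : ∀ x, ξ x ≤ B)
    {s r u : ℝ} (ht : t ≤ s) (hsr : s ≤ r) (hrT : r ≤ T) (hru : r ≤ u) :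
    ftil γ t η ξ s r u
      ≤ (2 * η^2 * B * B * Real.exp (η^2 * ((T - t) ^ (1 - 2*γ) / (1 - 2*γ))))
        * (r - s) ^ (-(2*γ)) := by
  have hB0 : 0 ≤ B := le_trans (h0 t) (hB t)
  have hKf : Kf γ r u s ≤ (r - s) ^ (-(2*γ)) := Kf_le hγ0 hsr hru
  have hKf0 : 0 ≤ Kf γ r u s := Kf_nonneg hsr (hsr.trans hru)
  have hE : Real.exp (η^2 * Pfun γ t (s, r, u))
      ≤ Real.exp (η^2 * ((T - t) ^ (1 - 2*γ) / (1 - 2*γ))) := by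
    apply Real.exp_le_exp.2
    apply mul_le_mul_of_nonneg_left _ (sq_nonneg η)
    rw [← eqP ht]
    exact G_le_A0 hγ0 hγ ht hsr hrT hru
  have hξ : 2 * η^2 * ξ r * ξ u ≤ 2 * η^2 * B * B := by
    have hmm : ξ r * ξ u ≤ B * B := mul_le_mul (hB r) (hB u) (h0 u) hB0
    calc 2 * η^2 * ξ r * ξ u = 2 * η^2 * (ξ r * ξ u) := by ring
      _ ≤ 2 * η^2 * (B * B) := mul_le_mul_of_nonneg_left hmm (by positivity)
      _ = 2 * η^2 * B * B := by ring
  have heq : ftil γ t η ξ s r u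
      = (2 * η^2 * ξ r * ξ u) * (Kf γ r u s * Real.exp (η^2 * Pfun γ t (s, r, u))) := by
    unfold ftil Kf; ring
  rw [heq]
  calc (2 * η^2 * ξ r * ξ u) * (Kf γ r u s * Real.exp (η^2 * Pfun γ t (s, r, u)))
      ≤ (2 * η^2 * B * B) * ((r - s) ^ (-(2*γ))
          * Real.exp (η^2 * ((T - t) ^ (1 - 2*γ) / (1 - 2*γ)))) := by
        apply mul_le_mul hξ (mul_le_mul hKf hE (Real.exp_pos _).le
          (Real.rpow_nonneg (by linarith) _))
          (mul_nonneg hKf0 (Real.exp_pos _).le)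
        positivity
    _ = (2 * η^2 * B * B * Real.exp (η^2 * ((T - t) ^ (1 - 2*γ) / (1 - 2*γ))))
          * (r - s) ^ (-(2*γ)) := by ring

lemma restrict_finite {a b : ℝ} : IsFiniteMeasure (volume.restrict (Set.Ioc a b)) := by
  constructor
  rw [MeasureTheory.Measure.restrict_apply_univ]
  exact measure_Ioc_lt_top

lemma integrable_ite_rpow (hγ0 : 0 < γ) (hγ : γ < 1 / 2) {t T : ℝ} (htT : t ≤ T) :
    Integrable (fun p : ℝ × ℝ => if p.1 < p.2 then (p.2 - p.1) ^ (-(2*γ)) else 0)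
      ((volume.restrict (Set.Ioc t T)).prod (volume.restrict (Set.Ioc t T))) := by
  haveI : IsFiniteMeasure (volume.restrict (Set.Ioc t T)) := restrict_finite
  have hmeas : AEStronglyMeasurable
      (fun p : ℝ × ℝ => if p.1 < p.2 then (p.2 - p.1) ^ (-(2*γ)) else 0)
      ((volume.restrict (Set.Ioc t T)).prod (volume.restrict (Set.Ioc t T))) := by
    apply Measurable.aestronglyMeasurable
    exact Measurable.ite (measurableSet_lt measurable_fst measurable_snd)
      ((measurable_rpow_const (-(2*γ))).comp (measurable_snd.sub measurable_fst))
      measurable_const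
  rw [MeasureTheory.integrable_prod_iff hmeas]
  constructor
  · filter_upwards [ae_restrict_mem measurableSet_Ioc] with s _
    have hind : (fun r => if s < r then (r - s) ^ (-(2*γ)) else 0)
        = (Set.Ioi s).indicator (fun r => (r - s) ^ (-(2*γ))) := by
      funext r; simp [Set.indicator_apply, Set.mem_Ioi]
    rw [hind]
    apply MeasureTheory.Integrable.indicator _ measurableSet_Ioi
    exact (rpow_comp_intable' (by linarith : (-1:ℝ) < -(2*γ)) s t T).1
  · apply MeasureTheory.Integrable.mono' (g := fun _ => (T - t) ^ (1 - 2*γ) / (1 - 2*γ))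
      (MeasureTheory.integrable_const _)
    · exact hmeas.norm.integral_prod_right'
    · filter_upwards [ae_restrict_mem measurableSet_Ioc] with s hs
      rw [Real.norm_eq_abs, abs_of_nonneg (MeasureTheory.integral_nonneg (fun r => norm_nonneg _))]
      have hval : ∀ r : ℝ, ‖if s < r then (r - s) ^ (-(2*γ)) else 0‖
          = if s < r then (r - s) ^ (-(2*γ)) else 0 := by
        intro r
        rcases lt_or_ge s r with h | h
        · simp only [if_pos h]
          exact Real.norm_of_nonneg (Real.rpow_nonneg (by linarith) _)
        · simp [not_lt.2 h]
      simp only [hval]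
      have hind : (fun r => if s < r then (r - s) ^ (-(2*γ)) else 0)
          = (Set.Ioi s).indicator (fun r => (r - s) ^ (-(2*γ))) := by
        funext r; simp [Set.indicator_apply, Set.mem_Ioi]
      rw [hind, MeasureTheory.setIntegral_indicator measurableSet_Ioi]
      have hset : Set.Ioc t T ∩ Set.Ioi s = Set.Ioc s T := by
        ext r
        simp only [Set.mem_Ioc, Set.mem_inter_iff, Set.mem_Ioi]
        constructor
        · rintro ⟨⟨_, h2⟩, h3⟩; exact ⟨h3, h2⟩
        · rintro ⟨h1, h2⟩; exact ⟨⟨lt_trans hs.1 h1, h2⟩, h1⟩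
      rw [hset, ← intervalIntegral.integral_of_le hs.2]
      have hval2 : ∫ r in s..T, (r - s) ^ (-(2*γ)) = (T - s) ^ (1 - 2*γ) / (1 - 2*γ) := by
        rw [intervalIntegral.integral_comp_sub_right (fun x => x ^ (-(2*γ))) s, sub_self,
          integral_rpow (Or.inl (by linarith))]
        rw [Real.zero_rpow (by intro h; nlinarith [h] : -(2*γ) + 1 ≠ 0)]
        ring_nf
      rw [hval2]
      have h1 : (0:ℝ) < 1 - 2*γ := by linarith
      exact div_le_div_of_nonneg_right
        (Real.rpow_le_rpow (by linarith [hs.2]) (by linarith [hs.1]) h1.le) h1.le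

end Bounds
section Integ
variable {γ t T η B : ℝ} {ξ : ℝ → ℝ}

lemma integrable_rect (hγ0 : 0 < γ) (hγ : γ < 1 / 2) {r : ℝ} (htr : t ≤ r) (hrT : r ≤ T)
    (hc : Continuous ξ) (h0 : ∀ x, 0 ≤ ξ x) (hB : ∀ x, ξ x ≤ B) :
    Integrable (fun p : ℝ × ℝ => ftil γ t η ξ p.1 r p.2)
      ((volume.restrict (Set.Ioc t r)).prod (volume.restrict (Set.Ioc r T))) := by
  haveI : IsFiniteMeasure (volume.restrict (Set.Ioc t r)) := restrict_finite
  haveI : IsFiniteMeasure (volume.restrict (Set.Ioc r T)) := restrict_finite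
  set CE : ℝ := Real.exp (η^2 * ((T - t) ^ (1 - 2*γ) / (1 - 2*γ))) with hCE
  set C : ℝ := 2 * η^2 * B * B * CE with hC
  have hprod : Integrable (fun p : ℝ × ℝ => (C * (r - p.1) ^ (-(2*γ))) * (1:ℝ))
      ((volume.restrict (Set.Ioc t r)).prod (volume.restrict (Set.Ioc r T))) :=
    MeasureTheory.Integrable.mul_prod (L := ℝ)
      (f := fun s => C * (r - s) ^ (-(2*γ))) (g := fun _ => (1:ℝ))
      (((rpow_comp_intable (by linarith : (-1:ℝ) < -(2*γ)) r t r).const_mul C).1)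
      (MeasureTheory.integrable_const _)
  apply MeasureTheory.Integrable.mono' hprod
  · exact ((ftil_meas γ t η ξ hc.measurable).comp
      (measurable_fst.prodMk (measurable_const.prodMk measurable_snd))).aestronglyMeasurable
  · filter_upwards [ae_prod_mem measurableSet_Ioc measurableSet_Ioc] with p hp
    rw [Real.norm_eq_abs, abs_of_nonneg (ftil_nonneg h0 hp.1.2 (hp.1.2.trans hp.2.1.le))]
    calc ftil γ t η ξ p.1 r p.2 ≤ C * (r - p.1) ^ (-(2*γ)) :=
          ftil_le hγ0 hγ h0 hB hp.1.1.le hp.1.2 hrT hp.2.1.le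
      _ = (C * (r - p.1) ^ (-(2*γ))) * 1 := by ring

lemma integrable_tri1 (hγ0 : 0 < γ) (hγ : γ < 1 / 2) (htT : t ≤ T)
    (hc : Continuous ξ) (h0 : ∀ x, 0 ≤ ξ x) (hB : ∀ x, ξ x ≤ B) :
    Integrable (fun p : ℝ × ℝ =>
        if p.1 < p.2 then (∫ u in p.2..T, ftil γ t η ξ p.1 p.2 u) else 0)
      ((volume.restrict (Set.Ioc t T)).prod (volume.restrict (Set.Ioc t T))) := by
  haveI : IsFiniteMeasure (volume.restrict (Set.Ioc t T)) := restrict_finite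
  set CE : ℝ := Real.exp (η^2 * ((T - t) ^ (1 - 2*γ) / (1 - 2*γ))) with hCE
  set K0 : ℝ := 2 * η^2 * B * B * CE with hK0
  have hK00 : 0 ≤ K0 := by
    have hB0 : 0 ≤ B := le_trans (h0 t) (hB t)
    rw [hK0, hCE]; positivity
  apply MeasureTheory.Integrable.mono'
    ((integrable_ite_rpow hγ0 hγ htT).const_mul (K0 * (T - t)))
  · have hmeas : Measurable (fun p : ℝ × ℝ =>
        if p.1 < p.2 then Dhat γ t T η ξ p else 0) :=
      Measurable.ite (measurableSet_lt measurable_fst measurable_snd)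
        (Dhat_meas γ t T η ξ hc.measurable) measurable_const
    apply hmeas.aestronglyMeasurable.congr
    filter_upwards [ae_prod_mem measurableSet_Ioc measurableSet_Ioc] with p hp
    rcases lt_or_ge p.1 p.2 with h | h
    · simp only [if_pos h]
      exact (eqDhat (t := t) (γ := γ) hp.2.2 η ξ).symm
    · simp [not_lt.2 h]
  · filter_upwards [ae_prod_mem measurableSet_Ioc measurableSet_Ioc] with p hp
    rcases lt_or_ge p.1 p.2 with h | h
    · simp only [if_pos h]
      have hnorm : ∀ u ∈ Set.uIoc p.2 T, ‖ftil γ t η ξ p.1 p.2 u‖ ≤ K0 * (p.2 - p.1) ^ (-(2*γ)) := by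
        intro u hu
        rw [Set.uIoc_of_le hp.2.2] at hu
        rw [Real.norm_eq_abs, abs_of_nonneg (ftil_nonneg h0 h.le (h.le.trans hu.1.le))]
        exact ftil_le hγ0 hγ h0 hB hp.1.1.le h.le hp.2.2 hu.1.le
      have hb := intervalIntegral.norm_integral_le_of_norm_le_const hnorm
      have h1 : (∫ u in p.2..T, ftil γ t η ξ p.1 p.2 u)
          ≤ K0 * (p.2 - p.1) ^ (-(2*γ)) * |T - p.2| := le_trans (le_abs_self _) hb
      have h2 : ‖∫ u in p.2..T, ftil γ t η ξ p.1 p.2 u‖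
          ≤ K0 * (p.2 - p.1) ^ (-(2*γ)) * |T - p.2| := hb
      have h3 : |T - p.2| ≤ T - t := by
        rw [abs_of_nonneg (by linarith [hp.2.2])]
        linarith [hp.2.1]
      have h4 : (0:ℝ) ≤ (p.2 - p.1) ^ (-(2*γ)) := Real.rpow_nonneg (by linarith) _
      calc ‖∫ u in p.2..T, ftil γ t η ξ p.1 p.2 u‖
          ≤ K0 * (p.2 - p.1) ^ (-(2*γ)) * |T - p.2| := h2
        _ ≤ K0 * (p.2 - p.1) ^ (-(2*γ)) * (T - t) :=
            mul_le_mul_of_nonneg_left h3 (by positivity)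
        _ = K0 * (T - t) * (p.2 - p.1) ^ (-(2*γ)) := by ring
    · simp only [if_neg (not_lt.2 h), norm_zero, mul_zero, le_refl]

lemma integrable_tri2 (hγ0 : 0 < γ) (hγ : γ < 1 / 2) (htT : t ≤ T)
    (hc : Continuous ξ) (h0 : ∀ x, 0 ≤ ξ x) (hB : ∀ x, ξ x ≤ B) :
    Integrable (fun p : ℝ × ℝ =>
        if p.1 < p.2 then
          2 * ξ p.1 * ξ p.2 * (Real.exp (η^2 * ∫ v in t..p.1, Kf γ p.1 p.2 v) - 1)
        else 0)
      ((volume.restrict (Set.Ioc t T)).prod (volume.restrict (Set.Ioc t T))) := by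
  haveI : IsFiniteMeasure (volume.restrict (Set.Ioc t T)) := restrict_finite
  set CE : ℝ := Real.exp (η^2 * ((T - t) ^ (1 - 2*γ) / (1 - 2*γ))) with hCE
  have hB0 : 0 ≤ B := le_trans (h0 t) (hB t)
  have hCE0 : 0 ≤ CE := (Real.exp_pos _).le
  apply MeasureTheory.Integrable.mono' (g := fun _ => 2 * B * B * (CE + 1))
    (MeasureTheory.integrable_const _)
  · have hmeas : Measurable (fun p : ℝ × ℝ =>
        if p.1 < p.2 then
          2 * ξ p.1 * ξ p.2 * (Real.exp (η^2 * Pfun γ t (p.1, p.1, p.2)) - 1)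
        else 0) := by
      apply Measurable.ite (measurableSet_lt measurable_fst measurable_snd) _ measurable_const
      apply Measurable.mul
      · exact (measurable_const.mul (hc.measurable.comp measurable_fst)).mul
          (hc.measurable.comp measurable_snd)
      · exact (Real.measurable_exp.comp (measurable_const.mul
          ((Pfun_meas γ t).comp
            (measurable_fst.prodMk (measurable_fst.prodMk measurable_snd))))).sub
          measurable_const
    apply hmeas.aestronglyMeasurable.congr
    filter_upwards [ae_prod_mem measurableSet_Ioc measurableSet_Ioc] with p hp
    rcases lt_or_ge p.1 p.2 with h | h
    · simp only [if_pos h]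
      rw [eqP hp.1.1.le]
    · simp [not_lt.2 h]
  · filter_upwards [ae_prod_mem measurableSet_Ioc measurableSet_Ioc] with p hp
    rcases lt_or_ge p.1 p.2 with h | h
    · simp only [if_pos h]
      have hG0 : 0 ≤ ∫ v in t..p.1, Kf γ p.1 p.2 v := G_nonneg hp.1.1.le le_rfl h.le
      have hGA : (∫ v in t..p.1, Kf γ p.1 p.2 v) ≤ (T - t) ^ (1 - 2*γ) / (1 - 2*γ) :=
        G_le_A0 hγ0 hγ hp.1.1.le le_rfl hp.1.2 h.le
      have hE1 : (1:ℝ) ≤ Real.exp (η^2 * ∫ v in t..p.1, Kf γ p.1 p.2 v) :=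
        Real.one_le_exp (by positivity)
      have hECE : Real.exp (η^2 * ∫ v in t..p.1, Kf γ p.1 p.2 v) ≤ CE := by
        rw [hCE]
        exact Real.exp_le_exp.2 (mul_le_mul_of_nonneg_left hGA (sq_nonneg η))
      have hξξ : ξ p.1 * ξ p.2 ≤ B * B := mul_le_mul (hB p.1) (hB p.2) (h0 p.2) hB0
      have hnn : (0:ℝ) ≤ 2 * ξ p.1 * ξ p.2 *
          (Real.exp (η^2 * ∫ v in t..p.1, Kf γ p.1 p.2 v) - 1) :=
        mul_nonneg (mul_nonneg (by linarith [h0 p.1]) (h0 p.2)) (by linarith)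
      rw [Real.norm_eq_abs, abs_of_nonneg hnn]
      have h5 : ξ p.1 * ξ p.2 *
          (Real.exp (η^2 * ∫ v in t..p.1, Kf γ p.1 p.2 v) - 1) ≤ (B * B) * (CE + 1) :=
        mul_le_mul hξξ (by linarith) (by linarith)
          (mul_nonneg hB0 hB0)
      nlinarith [h5]
    · simp only [if_neg (not_lt.2 h), norm_zero]
      positivity

end Integ
section Main

theorem main_cont (γ η t T B : ℝ) (hγ0 : 0 < γ) (hγ : γ < 1 / 2) (htT : t < T)
    (ξ : ℝ → ℝ) (hc : Continuous ξ) (h0 : ∀ x, 0 ≤ ξ x) (hB : ∀ x, ξ x ≤ B) :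
    (∫ s in t..T, ∫ r in s..T, ∫ u in r..T,
        2 * η ^ 2 * ξ r * ξ u * (r - s) ^ (-γ) * (u - s) ^ (-γ) *
          Real.exp (η ^ 2 * ∫ v in t..s, (r - v) ^ (-γ) * (u - v) ^ (-γ)))
      = 2 * ∫ u in t..T, ξ u * ∫ r in t..u, ξ r *
          (Real.exp (η ^ 2 * ∫ v in t..r, (r - v) ^ (-γ) * (u - v) ^ (-γ)) - 1) := by
  have stepA : (∫ s in t..T, ∫ r in s..T, ∫ u in r..T,
      2 * η ^ 2 * ξ r * ξ u * (r - s) ^ (-γ) * (u - s) ^ (-γ) *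
        Real.exp (η ^ 2 * ∫ v in t..s, (r - v) ^ (-γ) * (u - v) ^ (-γ)))
      = ∫ s in t..T, ∫ r in s..T, ∫ u in r..T, ftil γ t η ξ s r u := by
    apply intervalIntegral.integral_congr
    intro s hs
    rw [Set.uIcc_of_le htT.le] at hs
    apply intervalIntegral.integral_congr
    intro r _
    apply intervalIntegral.integral_congr
    intro u _
    unfold ftil
    rw [← eqP hs.1]
    simp only [Kf]
  have stepCD : ∀ r ∈ Set.uIcc t T, (∫ s in t..r, ∫ u in r..T, ftil γ t η ξ s r u)
      = ∫ u in r..T, 2 * ξ r * ξ u *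
          (Real.exp (η ^ 2 * ∫ v in t..r, Kf γ r u v) - 1) := by
    intro r hr
    rw [Set.uIcc_of_le htT.le] at hr
    rw [rect_swap hr.1 hr.2 (fun s u => ftil γ t η ξ s r u)
      (integrable_rect hγ0 hγ hr.1 hr.2 hc h0 hB)]
    apply intervalIntegral.integral_congr
    intro u hu
    dsimp only
    rw [Set.uIcc_of_le hr.2] at hu
    have hinner : ∀ s ∈ Set.uIcc t r, ftil γ t η ξ s r u
        = (2 * ξ r * ξ u) *
          (η ^ 2 * Kf γ r u s * Real.exp (η ^ 2 * ∫ v in t..s, Kf γ r u v)) := by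
      intro s hsm
      rw [Set.uIcc_of_le hr.1] at hsm
      unfold ftil
      rw [← eqP hsm.1]
      unfold Kf
      ring
    rw [intervalIntegral.integral_congr hinner, intervalIntegral.integral_const_mul,
      FTC_core hγ0 hγ hr.1 hu.1]
  calc (∫ s in t..T, ∫ r in s..T, ∫ u in r..T,
      2 * η ^ 2 * ξ r * ξ u * (r - s) ^ (-γ) * (u - s) ^ (-γ) *
        Real.exp (η ^ 2 * ∫ v in t..s, (r - v) ^ (-γ) * (u - v) ^ (-γ)))
      = ∫ s in t..T, ∫ r in s..T, ∫ u in r..T, ftil γ t η ξ s r u := stepA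
    _ = ∫ r in t..T, ∫ s in t..r, ∫ u in r..T, ftil γ t η ξ s r u :=
        triangle_swap htT.le (fun s r => ∫ u in r..T, ftil γ t η ξ s r u)
          (integrable_tri1 hγ0 hγ htT.le hc h0 hB)
    _ = ∫ r in t..T, ∫ u in r..T, 2 * ξ r * ξ u *
          (Real.exp (η ^ 2 * ∫ v in t..r, Kf γ r u v) - 1) :=
        intervalIntegral.integral_congr stepCD
    _ = ∫ u in t..T, ∫ r in t..u, 2 * ξ r * ξ u *
          (Real.exp (η ^ 2 * ∫ v in t..r, Kf γ r u v) - 1) :=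
        triangle_swap htT.le
          (fun r u => 2 * ξ r * ξ u * (Real.exp (η ^ 2 * ∫ v in t..r, Kf γ r u v) - 1))
          (integrable_tri2 hγ0 hγ htT.le hc h0 hB)
    _ = 2 * ∫ u in t..T, ξ u * ∫ r in t..u, ξ r *
          (Real.exp (η ^ 2 * ∫ v in t..r, (r - v) ^ (-γ) * (u - v) ^ (-γ)) - 1) := by
        rw [← intervalIntegral.integral_const_mul]
        apply intervalIntegral.integral_congr
        intro u _
        dsimp only
        have hin : ∀ r ∈ Set.uIcc t u,
            2 * ξ r * ξ u * (Real.exp (η ^ 2 * ∫ v in t..r, Kf γ r u v) - 1)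
            = (2 * ξ u) * (ξ r *
                (Real.exp (η ^ 2 * ∫ v in t..r, (r - v) ^ (-γ) * (u - v) ^ (-γ)) - 1)) := by
          intro r _
          unfold Kf
          ring
        rw [intervalIntegral.integral_congr hin, intervalIntegral.integral_const_mul]
        ring

end Main

end RB

/-- Simplification of the triple-integral expression for `(M ⋄ M)_t(T)` (the variance
of the variance swap) in the rough Bergomi model: for `0 < γ < 1/2`, `η ≠ 0`, `t < T`
and `ξ` continuous and nonnegative on `[t, T]`,
`∫_t^T ∫_s^T ∫_r^T 2η² ξ(r) ξ(u) (r-s)^(-γ)(u-s)^(-γ)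
      exp(η² ∫_t^s (r-v)^(-γ)(u-v)^(-γ) dv) du dr ds
  = 2 ∫_t^T ξ(u) ∫_t^u ξ(r) [exp(η² ∫_t^r (r-v)^(-γ)(u-v)^(-γ) dv) - 1] dr du`. -/
theorem MdmM_triple_integral_simplification
    (γ η t T : ℝ) (hγ0 : 0 < γ) (hγ : γ < 1 / 2) (hη : η ≠ 0) (htT : t < T)
    (ξ : ℝ → ℝ) (hξcont : ContinuousOn ξ (Set.Icc t T))
    (hξnonneg : ∀ s ∈ Set.Icc t T, 0 ≤ ξ s) :
    (∫ s in t..T, ∫ r in s..T, ∫ u in r..T,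
        2 * η ^ 2 * ξ r * ξ u * (r - s) ^ (-γ) * (u - s) ^ (-γ) *
          Real.exp (η ^ 2 * ∫ v in t..s, (r - v) ^ (-γ) * (u - v) ^ (-γ)))
      = 2 * ∫ u in t..T, ξ u * ∫ r in t..u, ξ r *
          (Real.exp (η ^ 2 * ∫ v in t..r, (r - v) ^ (-γ) * (u - v) ^ (-γ)) - 1) := by

  set ξc : ℝ → ℝ := fun x => ξ (Set.projIcc t T htT.le x) with hξc
  have hcont : Continuous ξc :=
    hξcont.comp_continuous (continuous_subtype_val.comp continuous_projIcc)
      (fun x => (Set.projIcc t T htT.le x).2)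
  have heq : ∀ x ∈ Set.Icc t T, ξc x = ξ x := by
    intro x hx
    rw [hξc]
    simp [Set.projIcc_of_mem htT.le hx]
  have h0 : ∀ x, 0 ≤ ξc x := fun x => hξnonneg _ (Set.projIcc t T htT.le x).2
  obtain ⟨B, hBmem⟩ : ∃ B, B ∈ upperBounds (ξ '' Set.Icc t T) :=
    isCompact_Icc.bddAbove_image hξcont
  have hBc : ∀ x, ξc x ≤ B := fun x =>
    hBmem ⟨((Set.projIcc t T htT.le x) : ℝ), (Set.projIcc t T htT.le x).2, rfl⟩
  have hmain := main_cont γ η t T B hγ0 hγ htT ξc hcont h0 hBc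
  have hL : (∫ s in t..T, ∫ r in s..T, ∫ u in r..T,
      2 * η ^ 2 * ξ r * ξ u * (r - s) ^ (-γ) * (u - s) ^ (-γ) *
        Real.exp (η ^ 2 * ∫ v in t..s, (r - v) ^ (-γ) * (u - v) ^ (-γ)))
      = ∫ s in t..T, ∫ r in s..T, ∫ u in r..T,
      2 * η ^ 2 * ξc r * ξc u * (r - s) ^ (-γ) * (u - s) ^ (-γ) *
        Real.exp (η ^ 2 * ∫ v in t..s, (r - v) ^ (-γ) * (u - v) ^ (-γ)) := by
    apply intervalIntegral.integral_congr
    intro s hs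
    rw [Set.uIcc_of_le htT.le] at hs
    apply intervalIntegral.integral_congr
    intro r hr
    rw [Set.uIcc_of_le hs.2] at hr
    have hrIcc : r ∈ Set.Icc t T := ⟨hs.1.trans hr.1, hr.2⟩
    apply intervalIntegral.integral_congr
    intro u hu
    dsimp only
    rw [Set.uIcc_of_le hrIcc.2] at hu
    have huIcc : u ∈ Set.Icc t T := ⟨hrIcc.1.trans hu.1, hu.2⟩
    rw [heq r hrIcc, heq u huIcc]
  have hR : (2 * ∫ u in t..T, ξ u * ∫ r in t..u, ξ r *
      (Real.exp (η ^ 2 * ∫ v in t..r, (r - v) ^ (-γ) * (u - v) ^ (-γ)) - 1))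
      = 2 * ∫ u in t..T, ξc u * ∫ r in t..u, ξc r *
      (Real.exp (η ^ 2 * ∫ v in t..r, (r - v) ^ (-γ) * (u - v) ^ (-γ)) - 1) := by
    congr 1
    apply intervalIntegral.integral_congr
    intro u hu
    dsimp only
    rw [Set.uIcc_of_le htT.le] at hu
    rw [heq u hu]
    congr 1
    apply intervalIntegral.integral_congr
    intro r hr
    dsimp only
    rw [Set.uIcc_of_le hu.1] at hr
    have hrIcc : r ∈ Set.Icc t T := ⟨hr.1, hr.2.trans hu.2⟩
    rw [heq r hrIcc]
  rw [hL, hR]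
  exact hmain
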